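/- Let R be a commutative noetherian ring, A a finite R-algebra, and I an indecomposable injective left A-module with associated prime p ∈ Spec(R). Then the support of I as an R-module is the closure of {p}, i.e. Supp(I) = {q ∈ Spec(R) : p ⊆ q}. -/

import Mathlib

/-- A module is indecomposable if it is nonzero and is not the direct sum of two nonzero
submodules. -/
def Module.Indecomposable (A : Type*) [Ring A] (M : Type*) [AddCommGroup M]
    [Module A M] : Prop :=
  Nontrivial M ∧ ∀ N N' : Submodule A M, IsCompl N N' → N = ⊥ ∨ N' = ⊥

section aux

variable {R A : Type*} [CommRing R] [Ring A] [Algebra R A]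
    {I : Type*} [AddCommGroup I] [Module A I] [Module R I]
    [IsScalarTower R A I]

theorem aux_smul_comm (r : R) (a : A) (v : I) : r • a • v = a • r • v := by
  rw [← algebraMap_smul A r v, ← algebraMap_smul A r (a • v), ← mul_smul, ← mul_smul,
    Algebra.commutes]

variable (A) in
/-- The `s`-power-torsion `A`-submodule of `I`. -/
def sTor (s : R) : Submodule A I where
  carrier := {m | ∃ n : ℕ, s ^ n • m = 0}
  add_mem' := by
    rintro a b ⟨n, hn⟩ ⟨k, hk⟩
    refine ⟨n + k, ?_⟩
    have h1 : s ^ (n + k) • a = 0 := by rw [pow_add, mul_comm, mul_smul, hn, smul_zero]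
    have h2 : s ^ (n + k) • b = 0 := by rw [pow_add, mul_smul, hk, smul_zero]
    rw [smul_add, h1, h2, add_zero]
  zero_mem' := ⟨0, smul_zero _⟩
  smul_mem' := by
    rintro a m ⟨n, hn⟩
    exact ⟨n, by rw [aux_smul_comm, hn, smul_zero]⟩

theorem mem_sTor {s : R} {m : I} : m ∈ sTor A (I := I) s ↔ ∃ n : ℕ, s ^ n • m = 0 := Iff.rfl

end aux

section key

variable {R A : Type*} [CommRing R] [IsNoetherianRing R] [Ring A] [Algebra R A]
    [Module.Finite R A] {I : Type*} [AddCommGroup I] [Module A I] [Module R I]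
    [IsScalarTower R A I] [Module.Injective A I]

theorem aux_key (hind : Module.Indecomposable A I) (s : R) (x : I) (hx0 : x ≠ 0)
    (hsx : s • x = 0) (m : I) : ∃ n : ℕ, s ^ n • m = 0 := by
  classical
  haveI : SMulCommClass R A I := ⟨aux_smul_comm⟩
  set Γ : Submodule A I := sTor A s with hΓdef
  have hxΓ : x ∈ Γ := ⟨1, by rwa [pow_one]⟩
  -- Zorn: a maximal submodule disjoint from Γ
  obtain ⟨N, hN⟩ : ∃ N : Submodule A I, Maximal (fun N => Disjoint Γ N) N := by
    apply zorn_le₀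
    intro c hc hchain
    rcases c.eq_empty_or_nonempty with rfl | hne
    · exact ⟨⊥, disjoint_bot_right, by simp⟩
    · refine ⟨sSup c, ?_, fun z hz => le_sSup hz⟩
      show Disjoint Γ (sSup c)
      rw [Submodule.disjoint_def]
      intro y hyΓ hys
      obtain ⟨W, hWc, hyW⟩ := (Submodule.mem_sSup_of_directed hne hchain.directedOn).mp hys
      exact Submodule.disjoint_def.mp (hc hWc) y hyΓ hyW
  -- the projection from Γ ⊔ N onto Γ
  set S : Submodule A I := Γ ⊔ N with hSdef
  set C' : Submodule A S := Γ.comap S.subtype with hC'def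
  set N' : Submodule A S := N.comap S.subtype with hN'def
  have hcompl : IsCompl C' N' := by
    constructor
    · rw [Submodule.disjoint_def]
      intro y hyC hyN
      exact Subtype.ext (Submodule.disjoint_def.mp hN.prop _ hyC hyN)
    · rw [codisjoint_iff, eq_top_iff]
      rintro ⟨y, hy⟩ -
      obtain ⟨γ, hγ, nn, hnn, hsum⟩ := Submodule.mem_sup.mp hy
      have hγS : γ ∈ S := Submodule.mem_sup_left hγ
      have hnS : nn ∈ S := Submodule.mem_sup_right hnn
      have : (⟨y, hy⟩ : S) = ⟨γ, hγS⟩ + ⟨nn, hnS⟩ := Subtype.ext (by simp [← hsum])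
      rw [this]
      exact Submodule.add_mem_sup (Submodule.mem_comap.mpr hγ) (Submodule.mem_comap.mpr hnn)
  set pr : S →ₗ[A] I := S.subtype ∘ₗ C'.subtype ∘ₗ (C'.projectionOnto N' hcompl) with hprdef
  obtain ⟨ψ, hψ⟩ := Module.Injective.out S.subtype S.injective_subtype pr
  have hψΓ : ∀ z ∈ Γ, ψ z = z := by
    intro z hz
    have hzS : z ∈ S := Submodule.mem_sup_left hz
    have hzC : (⟨z, hzS⟩ : S) ∈ C' := Submodule.mem_comap.mpr hz
    have := hψ ⟨z, hzS⟩
    rwa [hprdef, LinearMap.comp_apply, LinearMap.comp_apply,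
      Submodule.projectionOnto_apply_left hcompl ⟨⟨z, hzS⟩, hzC⟩] at this
  have hψN : ∀ z ∈ N, ψ z = 0 := by
    intro z hz
    have hzS : z ∈ S := Submodule.mem_sup_right hz
    have := hψ ⟨z, hzS⟩
    rwa [hprdef, LinearMap.comp_apply, LinearMap.comp_apply,
      Submodule.projectionOnto_apply_of_mem_right hcompl (Submodule.mem_comap.mpr hz),
      map_zero, map_zero] at this
  -- essentiality of Γ in the range of ψ
  have hess : ∀ m' : I, m' ∈ LinearMap.range ψ → m' ≠ 0 →
      ∃ a : A, a • m' ∈ Γ ∧ a • m' ≠ 0 := by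
    rintro _ ⟨v, rfl⟩ hne
    have hvN : v ∉ N := fun hv => hne (hψN v hv)
    have hW : ¬ Disjoint Γ (N ⊔ Submodule.span A {v}) := by
      intro hdis
      exact hvN (hN.2 hdis le_sup_left
        (Submodule.mem_sup_right (Submodule.mem_span_singleton_self v)))
    rw [Submodule.disjoint_def] at hW
    push_neg at hW
    obtain ⟨γ, hγΓ, hγW, hγ0⟩ := hW
    obtain ⟨nn, hnn, cc, hcc, hsum⟩ := Submodule.mem_sup.mp hγW
    obtain ⟨a, rfl⟩ := Submodule.mem_span_singleton.mp hcc
    have key : a • (ψ v) = γ := by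
      have h2 : a • v = γ - nn := by rw [← hsum]; abel
      rw [← map_smul, h2, map_sub, hψΓ γ hγΓ, hψN nn hnn, sub_zero]
    exact ⟨a, by rw [key]; exact ⟨hγΓ, hγ0⟩⟩
  -- every element of the range of ψ is s-power-torsion
  have hrange : ∀ m' : I, m' ∈ LinearMap.range ψ → m' ∈ Γ := by
    intro m' hm'
    -- the A-span of m' is a finitely generated R-module
    let θ : A →ₗ[R] I :=
      { toFun := fun a => a • m'
        map_add' := fun a b => add_smul a b m'
        map_smul' := fun r a => by simp [smul_assoc] }
    set V : Submodule R I := LinearMap.range θ with hVdef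
    haveI : Module.Finite R V := Module.Finite.range θ
    haveI : IsNoetherian R V := isNoetherian_of_isNoetherianRing_of_finite R V
    set T : Submodule R V := (Γ.restrictScalars R).comap V.subtype with hTdef
    -- a uniform torsion bound on T
    obtain ⟨n, hn⟩ : ∃ n : ℕ, ∀ t ∈ T, s ^ n • (t : I) = 0 := by
      obtain ⟨G, hG⟩ := IsNoetherian.noetherian T
      have main : ∀ (G' : Finset V), (↑G' : Set V) ⊆ (T : Set V) →
          ∃ n : ℕ, ∀ g ∈ G', s ^ n • ((g : V) : I) = 0 := by
        intro G'
        induction G' using Finset.induction_on with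
        | empty => exact fun _ => ⟨0, by simp⟩
        | @insert g G'' hg ih =>
          intro hsub
          obtain ⟨n₁, hn₁⟩ := ih (by
            intro y hy; exact hsub (Finset.mem_insert_of_mem hy))
          have hgT : g ∈ T := hsub (Finset.mem_insert_self g G'')
          obtain ⟨n₂, hn₂⟩ := (Submodule.mem_comap.mp hgT : (g : I) ∈ Γ)
          have hn₂' : s ^ n₂ • (g : I) = 0 := hn₂
          refine ⟨n₁ + n₂, ?_⟩
          intro y hy
          rcases Finset.mem_insert.mp hy with rfl | hy'
          · rw [pow_add, mul_smul, hn₂', smul_zero]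
          · rw [pow_add, mul_comm, mul_smul, hn₁ y hy', smul_zero]
      obtain ⟨n, hn⟩ := main G (hG ▸ Submodule.subset_span)
      refine ⟨n, ?_⟩
      intro t ht
      have hker : T ≤ LinearMap.ker ((s ^ n) • (V.subtype)) := by
        rw [← hG, Submodule.span_le]
        intro g hg
        simpa using hn g hg
      simpa using hker ht
    -- kernels of multiplication by powers of s on V stabilize
    set f : ℕ →o Submodule R V :=
      ⟨fun j => LinearMap.ker ((s ^ j) • (LinearMap.id : V →ₗ[R] V)), by
        apply monotone_nat_of_le_succ
        intro j y hy
        simp only [LinearMap.mem_ker, LinearMap.smul_apply, LinearMap.id_apply] at hy ⊢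
        rw [pow_succ', mul_smul, hy, smul_zero]⟩ with hfdef
    obtain ⟨j₀, hj₀⟩ := (monotone_stabilizes_iff_noetherian.mpr ‹IsNoetherian R V›) f
    have hfmem : ∀ (j : ℕ) (w : V), w ∈ f j ↔ s ^ j • w = 0 := by
      intro j w
      simp [hfdef]
    -- claim : s ^ (n + j₀) • m' = 0
    refine ⟨n + j₀, ?_⟩
    by_contra hw
    have hwr : s ^ (n + j₀) • m' ∈ LinearMap.range ψ := by
      rw [← algebraMap_smul A (s ^ (n + j₀)) m']
      exact Submodule.smul_mem _ _ hm'
    obtain ⟨a, hz, hz0⟩ := hess _ hwr hw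
    have hza : a • (s ^ (n + j₀) • m') = s ^ (n + j₀) • (a • m') := (smul_comm _ _ _).symm
    have hamV : a • m' ∈ V := ⟨a, rfl⟩
    set u : V := ⟨a • m', hamV⟩ with hudef
    have hcoe : ∀ j : ℕ, ((s ^ j • u : V) : I) = s ^ j • (a • m') := fun j => rfl
    have huT : (s ^ (n + j₀)) • u ∈ T := by
      rw [hTdef, Submodule.mem_comap]
      show ((s ^ (n + j₀) • u : V) : I) ∈ Γ
      rw [hcoe, ← hza]
      exact hz
    have hu2 : s ^ (n + (n + j₀)) • u = 0 := by
      have h0 : s ^ n • ((s ^ (n + j₀)) • u : V) = 0 := by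
        apply Subtype.ext
        have := hn _ huT
        simpa using this
      rw [pow_add, mul_smul]
      exact h0
    have hu4 : u ∈ f j₀ := by
      rw [hj₀ (n + (n + j₀)) (by omega)]
      exact (hfmem _ _).mpr hu2
    have hu5 : s ^ j₀ • u = 0 := (hfmem _ _).mp hu4
    apply hz0
    rw [hza]
    have h6 : s ^ (n + j₀) • u = 0 := by
      rw [pow_add, mul_smul, hu5, smul_zero]
    calc s ^ (n + j₀) • (a • m') = ((s ^ (n + j₀) • u : V) : I) := (hcoe _).symm
    _ = 0 := by rw [h6]; rfl
  -- range ψ = Γ, and ψ is idempotent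
  have hrange_eq : LinearMap.range ψ = Γ :=
    le_antisymm (fun z hz => hrange z hz) (fun z hz => ⟨z, hψΓ z hz⟩)
  have hidem : ∀ v : I, ψ (ψ v) = ψ v := fun v =>
    hψΓ _ (hrange _ (LinearMap.mem_range_self ψ v))
  have hcompl2 : IsCompl (LinearMap.ker ψ) (LinearMap.range ψ) := by
    constructor
    · rw [Submodule.disjoint_def]
      intro y hyk hyr
      obtain ⟨v, hv⟩ := hyr
      have h1 : ψ y = 0 := hyk
      calc y = ψ v := hv.symm
      _ = ψ (ψ v) := (hidem v).symm
      _ = ψ y := by rw [hv]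
      _ = 0 := h1
    · rw [codisjoint_iff, eq_top_iff]
      intro v _
      have hdec : v = (v - ψ v) + ψ v := by abel
      rw [hdec]
      exact Submodule.add_mem_sup
        (LinearMap.mem_ker.mpr (by rw [map_sub, hidem, sub_self]))
        (LinearMap.mem_range_self ψ v)
  rcases hind.2 _ _ hcompl2 with hker | hrg
  · have h1 : m - ψ m ∈ LinearMap.ker ψ :=
      LinearMap.mem_ker.mpr (by rw [map_sub, hidem, sub_self])
    rw [hker, Submodule.mem_bot, sub_eq_zero] at h1
    exact hrange m ⟨m, h1.symm⟩
  · exfalso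
    rw [hrange_eq] at hrg
    apply hx0
    have h2 := hxΓ
    rw [hrg] at h2
    exact (Submodule.mem_bot A).mp h2

end key

/-- Let `R` be a commutative noetherian ring, `A` a finite `R`-algebra and `I` an
indecomposable injective left `A`-module with associated prime `p ∈ Spec R`.  Then the
support of `I` as an `R`-module is the closure of `{p}`, i.e.
`Supp I = {q ∈ Spec R : p ⊆ q}`. -/
theorem support_of_indecomposable_injective_eq_closure
    {R A : Type*} [CommRing R] [IsNoetherianRing R] [Ring A] [Algebra R A]
    [Module.Finite R A] (I : Type*) [AddCommGroup I] [Module A I] [Module R I]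
    [IsScalarTower R A I] [Module.Injective A I]
    (hind : Module.Indecomposable A I)
    (p : Ideal R) (hp : IsAssociatedPrime p I) :
    Module.support R I = {q : PrimeSpectrum R | p ≤ q.asIdeal} := by
  obtain ⟨hpp, x, hx⟩ := (isAssociatedPrime_iff).mp hp
  have hx : p = (Submodule.span R {x}).annihilator := by
    rw [hx]; ext r; simp [Submodule.mem_colon_singleton, Submodule.mem_annihilator_span_singleton]
  have hx0 : x ≠ 0 := by
    rintro rfl
    rw [Submodule.span_zero_singleton, Submodule.annihilator_bot] at hx
    exact hpp.ne_top hx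
  ext q
  simp only [Module.mem_support_iff_exists_annihilator, Set.mem_setOf_eq]
  constructor
  · rintro ⟨m, hm⟩
    by_contra hpq
    obtain ⟨s, hs, hsq⟩ := SetLike.not_le_iff_exists.mp hpq
    have hsx : s • x = 0 := (Submodule.mem_annihilator_span_singleton x s).mp (hx ▸ hs)
    obtain ⟨n, hn⟩ := aux_key hind s x hx0 hsx m
    have hsn : s ^ n ∈ (Submodule.span R {m}).annihilator :=
      (Submodule.mem_annihilator_span_singleton m (s ^ n)).mpr hn
    exact hsq (q.2.mem_of_pow_mem n (hm hsn))
  · intro hpq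
    exact ⟨x, hx ▸ hpq⟩
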